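/- (Strict Nash equilibria are pure and characterized by strict advantage gaps) In any n-agent tabular discounted MDP with direct distributed parameterization and d_θ(s) > 0 for all feasible θ and s, every strict Nash equilibrium θ* is deterministic: for each agent i and state s there is a unique action a_i*(s) with θ*_{s,a_i} = 1{a_i = a_i*(s)}. Moreover Ā_i^{θ*}(s, a_i*(s)) = 0 and Ā_i^{θ*}(s, a_i) < 0 for all a_i ≠ a_i*(s). -/

import Mathlib

open Finset

namespace MAMDP

variable {n : ℕ} {S : Type} [Fintype S] [DecidableEq S]
  {A : Fin n → Type} [∀ i, Fintype (A i)] [∀ i, DecidableEq (A i)]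

/-- Joint product policy probability. -/
def jointPi (θ : ∀ i, S → A i → ℝ) (s : S) (a : ∀ i, A i) : ℝ :=
  ∏ i, θ i s (a i)

/-- One-step evolution of a state distribution under the joint policy. -/
def stepDist (P : S → (∀ i, A i) → S → ℝ) (θ : ∀ i, S → A i → ℝ) (μ : S → ℝ) : S → ℝ :=
  fun s' => ∑ s, ∑ a, μ s * jointPi θ s a * P s a s'

/-- State distribution after `t` steps, starting from `μ`. -/
def visit (P : S → (∀ i, A i) → S → ℝ) (θ : ∀ i, S → A i → ℝ) (t : ℕ) (μ : S → ℝ) : S → ℝ :=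
  (stepDist P θ)^[t] μ

/-- Point mass at `s0`. -/
def deltaDist (s0 : S) : S → ℝ := fun s => if s = s0 then 1 else 0

/-- Discounted state visitation distribution `d_θ` for initial distribution `ρ`. -/
noncomputable def dvisit (P : S → (∀ i, A i) → S → ℝ) (θ : ∀ i, S → A i → ℝ) (γ : ℝ)
    (ρ : S → ℝ) (s : S) : ℝ :=
  (1 - γ) * ∑' t : ℕ, γ ^ t * visit P θ t ρ s

/-- Expected one-step reward at state `s` under the joint policy. -/
def expRew (rw : S → (∀ i, A i) → ℝ) (θ : ∀ i, S → A i → ℝ) (s : S) : ℝ :=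
  ∑ a, jointPi θ s a * rw s a

/-- Value function: expected discounted sum of rewards starting from state `s`. -/
noncomputable def Vval (P : S → (∀ i, A i) → S → ℝ) (θ : ∀ i, S → A i → ℝ) (γ : ℝ)
    (rw : S → (∀ i, A i) → ℝ) (s : S) : ℝ :=
  ∑' t : ℕ, γ ^ t * ∑ s', visit P θ t (deltaDist s) s' * expRew rw θ s'

/-- Q-function. -/
noncomputable def Qval (P : S → (∀ i, A i) → S → ℝ) (θ : ∀ i, S → A i → ℝ) (γ : ℝ)
    (rw : S → (∀ i, A i) → ℝ) (s : S) (a : ∀ i, A i) : ℝ :=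
  rw s a + γ * ∑ s', P s a s' * Vval P θ γ rw s'

/-- Total discounted reward `J` under initial distribution `ρ`. -/
noncomputable def Jval (P : S → (∀ i, A i) → S → ℝ) (θ : ∀ i, S → A i → ℝ) (γ : ℝ)
    (rw : S → (∀ i, A i) → ℝ) (ρ : S → ℝ) : ℝ :=
  ∑ s, ρ s * Vval P θ γ rw s

/-- Averaged Q-function of agent `i`: average of `Q(s, a)` with `a i = ai` fixed,
weighted by the other agents' policies. -/
noncomputable def Qbar (P : S → (∀ i, A i) → S → ℝ) (θ : ∀ i, S → A i → ℝ) (γ : ℝ)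
    (rw : S → (∀ i, A i) → ℝ) (i : Fin n) (s : S) (ai : A i) : ℝ :=
  ∑ a : ∀ j, A j, if a i = ai then
    (∏ j ∈ Finset.univ.erase i, θ j s (a j)) * Qval P θ γ rw s a else 0

/-- Averaged advantage function of agent `i`. -/
noncomputable def Abar (P : S → (∀ i, A i) → S → ℝ) (θ : ∀ i, S → A i → ℝ) (γ : ℝ)
    (rw : S → (∀ i, A i) → ℝ) (i : Fin n) (s : S) (ai : A i) : ℝ :=
  Qbar P θ γ rw i s ai - Vval P θ γ rw s

/-- Entries of the policy gradient `∇_{θ_i} J_i(θ)`: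
`(1/(1-γ)) d_θ(s) Q̄_i^θ(s, a_i)`. -/
noncomputable def gradJ (P : S → (∀ i, A i) → S → ℝ) (θ : ∀ i, S → A i → ℝ) (γ : ℝ)
    (rw : S → (∀ i, A i) → ℝ) (ρ : S → ℝ) (i : Fin n) (s : S) (ai : A i) : ℝ :=
  (1 / (1 - γ)) * dvisit P θ γ ρ s * Qbar P θ γ rw i s ai

/-- Feasibility of agent `i`'s parameters: a point of `Δ(A_i)^{|S|}`. -/
def feasibleAgent (i : Fin n) (θi : S → A i → ℝ) : Prop :=
  ∀ s, (∀ a, 0 ≤ θi s a) ∧ ∑ a, θi s a = 1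

/-- Feasibility of a joint parameter `θ ∈ X = ∏_i Δ(A_i)^{|S|}`. -/
def feasible (θ : ∀ i, S → A i → ℝ) : Prop := ∀ i, feasibleAgent i (θ i)

/-- `P` is a transition kernel. -/
def stochMat (P : S → (∀ i, A i) → S → ℝ) : Prop :=
  ∀ s a, (∀ s', 0 ≤ P s a s') ∧ ∑ s', P s a s' = 1

/-- `ρ` is a probability distribution on states. -/
def initDist (ρ : S → ℝ) : Prop := (∀ s, 0 ≤ ρ s) ∧ ∑ s, ρ s = 1

/-- Nash equilibrium. -/
def isNE (P : S → (∀ i, A i) → S → ℝ) (γ : ℝ) (r : Fin n → S → (∀ i, A i) → ℝ)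
    (ρ : S → ℝ) (θ : ∀ i, S → A i → ℝ) : Prop :=
  feasible θ ∧ ∀ (i : Fin n) (θi' : S → A i → ℝ), feasibleAgent i θi' →
    Jval P (Function.update θ i θi') γ (r i) ρ ≤ Jval P θ γ (r i) ρ

/-- Strict Nash equilibrium. -/
def strictNE (P : S → (∀ i, A i) → S → ℝ) (γ : ℝ) (r : Fin n → S → (∀ i, A i) → ℝ)
    (ρ : S → ℝ) (θ : ∀ i, S → A i → ℝ) : Prop :=
  feasible θ ∧ ∀ (i : Fin n) (θi' : S → A i → ℝ), feasibleAgent i θi' → θi' ≠ θ i →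
    Jval P (Function.update θ i θi') γ (r i) ρ < Jval P θ γ (r i) ρ

/-- Markov potential game with potential `φ`. -/
def isPotential (P : S → (∀ i, A i) → S → ℝ) (γ : ℝ) (r : Fin n → S → (∀ i, A i) → ℝ)
    (φ : S → (∀ i, A i) → ℝ) : Prop :=
  ∀ (θ : ∀ i, S → A i → ℝ), feasible θ → ∀ (i : Fin n) (θi' : S → A i → ℝ),
    feasibleAgent i θi' → ∀ s,
    Vval P (Function.update θ i θi') γ (r i) s - Vval P θ γ (r i) s
      = Vval P (Function.update θ i θi') γ φ s - Vval P θ γ φ s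

/-- Squared Euclidean distance between two joint parameters. -/
def polNormSq (x y : ∀ i, S → A i → ℝ) : ℝ :=
  ∑ i, ∑ s, ∑ a, (x i s a - y i s a) ^ 2

/-- The deterministic (pure) joint policy picking `astar i s`. -/
def purePol (astar : ∀ i : Fin n, S → A i) : ∀ i, S → A i → ℝ :=
  fun i s a => if a = astar i s then 1 else 0

end MAMDP
section Helpers
set_option linter.unusedSectionVars false
open MAMDP Finset

variable {n : ℕ} {S : Type} [Fintype S] [DecidableEq S]
  {A : Fin n → Type} [∀ i, Fintype (A i)] [∀ i, DecidableEq (A i)]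
  {P : S → (∀ i, A i) → S → ℝ} {θ : ∀ i, S → A i → ℝ} {γ : ℝ}
  {rw : S → (∀ i, A i) → ℝ} {μ : S → ℝ}

lemma jointPi_nonneg (hθ : feasible θ) (s : S) (a : ∀ i, A i) : 0 ≤ jointPi θ s a :=
  Finset.prod_nonneg fun i _ => (hθ i s).1 (a i)

lemma sum_jointPi (hθ : feasible θ) (s : S) : ∑ a, jointPi θ s a = 1 := by
  have h := Finset.prod_univ_sum (fun i : Fin n => (Finset.univ : Finset (A i)))
    (fun i ai => θ i s ai)
  rw [Fintype.piFinset_univ] at h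
  rw [show (∑ a : ∀ i, A i, jointPi θ s a) = ∑ a : ∀ i, A i, ∏ i, θ i s (a i) from rfl, ← h]
  exact Finset.prod_eq_one fun i _ => (hθ i s).2

lemma stepDist_initDist (hP : stochMat P) (hθ : feasible θ) (hμ : initDist μ) :
    initDist (stepDist P θ μ) := by
  constructor
  · intro s'
    apply Finset.sum_nonneg; intro s _; apply Finset.sum_nonneg; intro a _
    exact mul_nonneg (mul_nonneg (hμ.1 s) (jointPi_nonneg hθ s a)) ((hP s a).1 s')
  · unfold stepDist
    rw [Finset.sum_comm]
    have : ∀ s : S, ∑ s' : S, ∑ a, μ s * jointPi θ s a * P s a s' = μ s := by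
      intro s
      rw [Finset.sum_comm]
      have : ∀ a : ∀ i, A i, ∑ s' : S, μ s * jointPi θ s a * P s a s'
          = μ s * jointPi θ s a := by
        intro a
        rw [← Finset.mul_sum, (hP s a).2, mul_one]
      rw [Finset.sum_congr rfl fun a _ => this a, ← Finset.mul_sum, sum_jointPi hθ, mul_one]
    rw [Finset.sum_congr rfl fun s _ => this s, hμ.2]

lemma visit_succ (t : ℕ) (μ : S → ℝ) : visit P θ (t+1) μ = visit P θ t (stepDist P θ μ) := by
  simp [visit, Function.iterate_succ_apply]

lemma visit_succ' (t : ℕ) (μ : S → ℝ) : visit P θ (t+1) μ = stepDist P θ (visit P θ t μ) := by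
  simp [visit, Function.iterate_succ_apply']

lemma visit_initDist (hP : stochMat P) (hθ : feasible θ) (hμ : initDist μ) (t : ℕ) :
    initDist (visit P θ t μ) := by
  induction t with
  | zero => exact hμ
  | succ t ih => rw [visit_succ']; exact stepDist_initDist hP hθ ih

lemma deltaDist_initDist (s0 : S) : initDist (deltaDist s0) := by
  constructor
  · intro s; unfold deltaDist; positivity
  · simp [deltaDist]

lemma stepDist_linear (c : S → ℝ) (ν : S → S → ℝ) (s' : S) :
    stepDist P θ (fun s => ∑ s1, c s1 * ν s1 s) s' = ∑ s1, c s1 * stepDist P θ (ν s1) s' := by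
  unfold stepDist
  simp only [Finset.sum_mul, Finset.mul_sum]
  calc ∑ s, ∑ a : ∀ i, A i, ∑ s1, c s1 * ν s1 s * jointPi θ s a * P s a s'
      = ∑ s, ∑ s1, ∑ a : ∀ i, A i, c s1 * ν s1 s * jointPi θ s a * P s a s' :=
        Finset.sum_congr rfl fun s _ => Finset.sum_comm
    _ = ∑ s1, ∑ s, ∑ a : ∀ i, A i, c s1 * ν s1 s * jointPi θ s a * P s a s' :=
        Finset.sum_comm
    _ = ∑ s1, ∑ s, ∑ a : ∀ i, A i, c s1 * (ν s1 s * jointPi θ s a * P s a s') :=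
        Finset.sum_congr rfl fun s1 _ => Finset.sum_congr rfl fun s _ =>
          Finset.sum_congr rfl fun a _ => by ring

lemma visit_eq_sum_delta (t : ℕ) (μ : S → ℝ) (s' : S) :
    visit P θ t μ s' = ∑ s1, μ s1 * visit P θ t (deltaDist s1) s' := by
  induction t generalizing s' with
  | zero => simp [visit, deltaDist, eq_comm, Finset.sum_ite_eq']
  | succ t ih =>
    rw [visit_succ']
    have h : visit P θ t μ = fun s => ∑ s1, μ s1 * visit P θ t (deltaDist s1) s :=
      funext fun s => ih s
    rw [h, stepDist_linear]
    exact Finset.sum_congr rfl fun s1 _ => by rw [← visit_succ']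

lemma summable_of_bound {f : ℕ → ℝ} {C : ℝ} (hγ0 : 0 ≤ γ) (hγ1 : γ < 1)
    (h : ∀ t, |f t| ≤ C * γ ^ t) : Summable f :=
  Summable.of_norm_bounded ((summable_geometric_of_lt_one hγ0 hγ1).mul_left C)
    (by simpa [Real.norm_eq_abs] using h)

lemma inner_le (hμ : initDist μ) {f : S → ℝ} {C : ℝ} (h : ∀ s, f s ≤ C) :
    ∑ s, μ s * f s ≤ C := by
  calc ∑ s, μ s * f s ≤ ∑ s, μ s * C :=
        Finset.sum_le_sum fun s _ => mul_le_mul_of_nonneg_left (h s) (hμ.1 s)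
    _ = C := by rw [← Finset.sum_mul, hμ.2, one_mul]

lemma inner_nonneg (hμ : initDist μ) {f : S → ℝ} (h : ∀ s, 0 ≤ f s) :
    0 ≤ ∑ s, μ s * f s :=
  Finset.sum_nonneg fun s _ => mul_nonneg (hμ.1 s) (h s)

lemma abs_inner_le (hμ : initDist μ) {f : S → ℝ} {C : ℝ} (h : ∀ s, |f s| ≤ C) :
    |∑ s, μ s * f s| ≤ C := by
  calc |∑ s, μ s * f s| ≤ ∑ s, |μ s * f s| := Finset.abs_sum_le_sum_abs _ _
    _ = ∑ s, μ s * |f s| := Finset.sum_congr rfl fun s _ => by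
        rw [abs_mul, abs_of_nonneg (hμ.1 s)]
    _ ≤ C := inner_le hμ h

lemma expRew_nonneg (hθ : feasible θ) (hrw : ∀ s a, 0 ≤ rw s a ∧ rw s a ≤ 1) (s : S) :
    0 ≤ expRew rw θ s :=
  Finset.sum_nonneg fun a _ => mul_nonneg (jointPi_nonneg hθ s a) (hrw s a).1

lemma expRew_le_one (hθ : feasible θ) (hrw : ∀ s a, 0 ≤ rw s a ∧ rw s a ≤ 1) (s : S) :
    expRew rw θ s ≤ 1 := by
  calc expRew rw θ s ≤ ∑ a, jointPi θ s a * 1 :=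
        Finset.sum_le_sum fun a _ => mul_le_mul_of_nonneg_left (hrw s a).2 (jointPi_nonneg hθ s a)
    _ = 1 := by rw [← Finset.sum_mul, sum_jointPi hθ, one_mul]

end Helpers
section Helpers2
set_option linter.unusedSectionVars false
open MAMDP Finset

variable {n : ℕ} {S : Type} [Fintype S] [DecidableEq S]
  {A : Fin n → Type} [∀ i, Fintype (A i)] [∀ i, DecidableEq (A i)]
  {P : S → (∀ i, A i) → S → ℝ} {θ : ∀ i, S → A i → ℝ} {γ : ℝ}
  {rw : S → (∀ i, A i) → ℝ} {μ : S → ℝ}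

lemma vterm_nonneg (hP : stochMat P) (hθ : feasible θ)
    (hrw : ∀ s a, 0 ≤ rw s a ∧ rw s a ≤ 1) (hμ : initDist μ) (t : ℕ) :
    0 ≤ ∑ s', visit P θ t μ s' * expRew rw θ s' :=
  inner_nonneg (visit_initDist hP hθ hμ t) (expRew_nonneg hθ hrw)

lemma vterm_le_one (hP : stochMat P) (hθ : feasible θ)
    (hrw : ∀ s a, 0 ≤ rw s a ∧ rw s a ≤ 1) (hμ : initDist μ) (t : ℕ) :
    ∑ s', visit P θ t μ s' * expRew rw θ s' ≤ 1 :=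
  inner_le (visit_initDist hP hθ hμ t) (expRew_le_one hθ hrw)

lemma summable_vseries (hP : stochMat P) (hθ : feasible θ)
    (hrw : ∀ s a, 0 ≤ rw s a ∧ rw s a ≤ 1) (hγ0 : 0 ≤ γ) (hγ1 : γ < 1) (hμ : initDist μ) :
    Summable (fun t => γ ^ t * ∑ s', visit P θ t μ s' * expRew rw θ s') := by
  refine summable_of_bound (C := 1) hγ0 hγ1 fun t => ?_
  rw [abs_mul, abs_of_nonneg (pow_nonneg hγ0 t),
    abs_of_nonneg (vterm_nonneg hP hθ hrw hμ t), one_mul]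
  exact mul_le_of_le_one_right (pow_nonneg hγ0 t) (vterm_le_one hP hθ hrw hμ t)

lemma Vval_nonneg (hP : stochMat P) (hθ : feasible θ)
    (hrw : ∀ s a, 0 ≤ rw s a ∧ rw s a ≤ 1) (hγ0 : 0 ≤ γ) (s : S) :
    0 ≤ Vval P θ γ rw s :=
  tsum_nonneg fun t => mul_nonneg (pow_nonneg hγ0 t)
    (vterm_nonneg hP hθ hrw (deltaDist_initDist s) t)

lemma Vval_le (hP : stochMat P) (hθ : feasible θ)
    (hrw : ∀ s a, 0 ≤ rw s a ∧ rw s a ≤ 1) (hγ0 : 0 ≤ γ) (hγ1 : γ < 1) (s : S) :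
    Vval P θ γ rw s ≤ (1 - γ)⁻¹ := by
  have h := Summable.tsum_le_tsum (f := fun t => γ ^ t * ∑ s', visit P θ t (deltaDist s) s' * expRew rw θ s')
    (g := fun t => γ ^ t)
    (fun t => mul_le_of_le_one_right (pow_nonneg hγ0 t)
      (vterm_le_one hP hθ hrw (deltaDist_initDist s) t))
    (summable_vseries hP hθ hrw hγ0 hγ1 (deltaDist_initDist s))
    (summable_geometric_of_lt_one hγ0 hγ1)
  rwa [tsum_geometric_of_lt_one hγ0 hγ1] at h

lemma stepDist_delta (s s1 : S) :
    stepDist P θ (deltaDist s) s1 = ∑ a, jointPi θ s a * P s a s1 := by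
  unfold stepDist deltaDist
  rw [Finset.sum_comm]
  refine Finset.sum_congr rfl fun a _ => ?_
  simp [ite_mul, Finset.sum_ite_eq']

lemma Vval_bellman (hP : stochMat P) (hθ : feasible θ)
    (hrw : ∀ s a, 0 ≤ rw s a ∧ rw s a ≤ 1) (hγ0 : 0 ≤ γ) (hγ1 : γ < 1) (s : S) :
    Vval P θ γ rw s = expRew rw θ s
      + γ * ∑ s1, stepDist P θ (deltaDist s) s1 * Vval P θ γ rw s1 := by
  have hsum : ∀ s0 : S,
      Summable (fun t => γ ^ t * ∑ s', visit P θ t (deltaDist s0) s' * expRew rw θ s') :=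
    fun s0 => summable_vseries hP hθ hrw hγ0 hγ1 (deltaDist_initDist s0)
  have key : ∀ t : ℕ, γ ^ (t+1) * ∑ s', visit P θ (t+1) (deltaDist s) s' * expRew rw θ s'
      = ∑ s1, stepDist P θ (deltaDist s) s1 * γ
          * (γ ^ t * ∑ s', visit P θ t (deltaDist s1) s' * expRew rw θ s') := by
    intro t
    rw [visit_succ]
    have h1 : ∀ s' : S, visit P θ t (stepDist P θ (deltaDist s)) s' * expRew rw θ s'
        = ∑ s1, stepDist P θ (deltaDist s) s1 * visit P θ t (deltaDist s1) s' * expRew rw θ s' := by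
      intro s'
      rw [visit_eq_sum_delta, Finset.sum_mul]
    rw [Finset.sum_congr rfl fun s' _ => h1 s']
    simp only [Finset.mul_sum]
    rw [Finset.sum_comm]
    exact Finset.sum_congr rfl fun s1 _ => Finset.sum_congr rfl fun s' _ => by ring
  show (∑' t : ℕ, γ ^ t * ∑ s', visit P θ t (deltaDist s) s' * expRew rw θ s') = _
  rw [Summable.tsum_eq_zero_add (hsum s)]
  congr 1
  · simp [visit, deltaDist, expRew, ite_mul, Finset.sum_ite_eq']
  · calc (∑' t : ℕ, γ ^ (t+1) * ∑ s', visit P θ (t+1) (deltaDist s) s' * expRew rw θ s')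
        = ∑' t : ℕ, ∑ s1, stepDist P θ (deltaDist s) s1 * γ
            * (γ ^ t * ∑ s', visit P θ t (deltaDist s1) s' * expRew rw θ s') := tsum_congr key
      _ = ∑ s1, ∑' t : ℕ, stepDist P θ (deltaDist s) s1 * γ
            * (γ ^ t * ∑ s', visit P θ t (deltaDist s1) s' * expRew rw θ s') :=
          Summable.tsum_finsetSum fun s1 _ => (hsum s1).mul_left _
      _ = ∑ s1, stepDist P θ (deltaDist s) s1 * γ * Vval P θ γ rw s1 :=
          Finset.sum_congr rfl fun s1 _ => tsum_mul_left
      _ = γ * ∑ s1, stepDist P θ (deltaDist s) s1 * Vval P θ γ rw s1 := by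
          rw [Finset.mul_sum]
          exact Finset.sum_congr rfl fun s1 _ => by ring

lemma Vval_eq_sum_Q (hP : stochMat P) (hθ : feasible θ)
    (hrw : ∀ s a, 0 ≤ rw s a ∧ rw s a ≤ 1) (hγ0 : 0 ≤ γ) (hγ1 : γ < 1) (s : S) :
    Vval P θ γ rw s = ∑ a, jointPi θ s a * Qval P θ γ rw s a := by
  rw [Vval_bellman hP hθ hrw hγ0 hγ1 s]
  unfold Qval
  have h2 : ∑ s1, stepDist P θ (deltaDist s) s1 * Vval P θ γ rw s1
      = ∑ a, jointPi θ s a * ∑ s1, P s a s1 * Vval P θ γ rw s1 := by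
    rw [Finset.sum_congr rfl fun s1 _ => by rw [stepDist_delta, Finset.sum_mul]]
    simp only [Finset.mul_sum]
    rw [Finset.sum_comm]
    exact Finset.sum_congr rfl fun a _ => Finset.sum_congr rfl fun s1 _ => by ring
  rw [h2]
  simp only [mul_add, Finset.sum_add_distrib]
  congr 1
  rw [Finset.mul_sum]
  exact Finset.sum_congr rfl fun a _ => by ring

lemma jointPi_update (i : Fin n) (θi' : S → A i → ℝ) (s : S) (a : ∀ j, A j) :
    jointPi (Function.update θ i θi') s a
      = θi' s (a i) * ∏ j ∈ Finset.univ.erase i, θ j s (a j) := by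
  unfold jointPi
  rw [← Finset.mul_prod_erase Finset.univ _ (Finset.mem_univ i), Function.update_self]
  congr 1
  exact Finset.prod_congr rfl fun j hj => by
    rw [Function.update_of_ne (Finset.mem_erase.mp hj).1]

lemma sum_jointPi_update_Q (i : Fin n) (θi' : S → A i → ℝ) (s : S) :
    ∑ a, jointPi (Function.update θ i θi') s a * Qval P θ γ rw s a
      = ∑ ai, θi' s ai * Qbar P θ γ rw i s ai := by
  unfold Qbar
  simp only [Finset.mul_sum]
  rw [Finset.sum_comm]
  refine Finset.sum_congr rfl fun a _ => ?_
  rw [jointPi_update]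
  simp only [mul_ite, mul_zero, Finset.sum_ite_eq, Finset.mem_univ, if_true]
  ring

lemma Vval_eq_sum_Qbar (hP : stochMat P) (hθ : feasible θ)
    (hrw : ∀ s a, 0 ≤ rw s a ∧ rw s a ≤ 1) (hγ0 : 0 ≤ γ) (hγ1 : γ < 1) (i : Fin n) (s : S) :
    Vval P θ γ rw s = ∑ ai, θ i s ai * Qbar P θ γ rw i s ai := by
  have h := sum_jointPi_update_Q (P := P) (θ := θ) (γ := γ) (rw := rw) i (θ i) s
  rw [Function.update_eq_self] at h
  rw [Vval_eq_sum_Q hP hθ hrw hγ0 hγ1 s, h]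

end Helpers2
section Helpers3
set_option linter.unusedSectionVars false
open MAMDP Finset Filter

variable {n : ℕ} {S : Type} [Fintype S] [DecidableEq S]
  {A : Fin n → Type} [∀ i, Fintype (A i)] [∀ i, DecidableEq (A i)]
  {P : S → (∀ i, A i) → S → ℝ} {θ θ' : ∀ i, S → A i → ℝ} {γ : ℝ}
  {rw : S → (∀ i, A i) → ℝ} {μ ρ : S → ℝ}

lemma wsum_le {ι : Type*} [Fintype ι] {w f : ι → ℝ} {C : ℝ} (h0 : ∀ x, 0 ≤ w x)
    (h1 : ∑ x, w x = 1) (hf : ∀ x, f x ≤ C) : ∑ x, w x * f x ≤ C := by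
  calc ∑ x, w x * f x ≤ ∑ x, w x * C :=
        Finset.sum_le_sum fun x _ => mul_le_mul_of_nonneg_left (hf x) (h0 x)
    _ = C := by rw [← Finset.sum_mul, h1, one_mul]

lemma initDist_le_one (hμ : initDist μ) (s : S) : μ s ≤ 1 := by
  have := Finset.single_le_sum (f := μ) (fun s _ => hμ.1 s) (Finset.mem_univ s)
  rwa [hμ.2] at this

lemma Qval_nonneg (hP : stochMat P) (hθ : feasible θ)
    (hrw : ∀ s a, 0 ≤ rw s a ∧ rw s a ≤ 1) (hγ0 : 0 ≤ γ) (s : S) (a : ∀ i, A i) :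
    0 ≤ Qval P θ γ rw s a := by
  refine add_nonneg (hrw s a).1 (mul_nonneg hγ0 ?_)
  exact Finset.sum_nonneg fun s' _ =>
    mul_nonneg ((hP s a).1 s') (Vval_nonneg hP hθ hrw hγ0 s')

lemma Qval_le (hP : stochMat P) (hθ : feasible θ)
    (hrw : ∀ s a, 0 ≤ rw s a ∧ rw s a ≤ 1) (hγ0 : 0 ≤ γ) (hγ1 : γ < 1) (s : S) (a : ∀ i, A i) :
    Qval P θ γ rw s a ≤ (1 - γ)⁻¹ := by
  have h1 : ∑ s', P s a s' * Vval P θ γ rw s' ≤ (1 - γ)⁻¹ :=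
    wsum_le (hP s a).1 (hP s a).2 (Vval_le hP hθ hrw hγ0 hγ1)
  have hne : (1 : ℝ) - γ ≠ 0 := by linarith
  have key : (1 : ℝ) + γ * (1 - γ)⁻¹ = (1 - γ)⁻¹ := by field_simp; ring
  calc Qval P θ γ rw s a ≤ 1 + γ * ∑ s', P s a s' * Vval P θ γ rw s' :=
        add_le_add (hrw s a).2 le_rfl
    _ ≤ 1 + γ * (1 - γ)⁻¹ := by
        have := mul_le_mul_of_nonneg_left h1 hγ0
        linarith
    _ = (1 - γ)⁻¹ := key

/-- The "advantage-like" quantity appearing in the performance difference lemma. -/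
noncomputable def pdg (P : S → (∀ i, A i) → S → ℝ) (θ θ' : ∀ i, S → A i → ℝ) (γ : ℝ)
    (rw : S → (∀ i, A i) → ℝ) (s : S) : ℝ :=
  ∑ a, jointPi θ' s a * Qval P θ γ rw s a - Vval P θ γ rw s

lemma abs_pdg_le (hP : stochMat P) (hθ : feasible θ) (hθ' : feasible θ')
    (hrw : ∀ s a, 0 ≤ rw s a ∧ rw s a ≤ 1) (hγ0 : 0 ≤ γ) (hγ1 : γ < 1) (s : S) :
    |pdg P θ θ' γ rw s| ≤ (1 - γ)⁻¹ := by
  have h1 : 0 ≤ ∑ a, jointPi θ' s a * Qval P θ γ rw s a :=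
    Finset.sum_nonneg fun a _ =>
      mul_nonneg (jointPi_nonneg hθ' s a) (Qval_nonneg hP hθ hrw hγ0 s a)
  have h2 : ∑ a, jointPi θ' s a * Qval P θ γ rw s a ≤ (1 - γ)⁻¹ :=
    wsum_le (jointPi_nonneg hθ' s) (sum_jointPi hθ' s) (Qval_le hP hθ hrw hγ0 hγ1 s)
  have h3 : 0 ≤ Vval P θ γ rw s := Vval_nonneg hP hθ hrw hγ0 s
  have h4 : Vval P θ γ rw s ≤ (1 - γ)⁻¹ := Vval_le hP hθ hrw hγ0 hγ1 s
  rw [abs_le]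
  constructor <;> [unfold pdg; unfold pdg] <;> linarith

lemma abs_Vdiff_le (hP : stochMat P) (hθ : feasible θ) (hθ' : feasible θ')
    (hrw : ∀ s a, 0 ≤ rw s a ∧ rw s a ≤ 1) (hγ0 : 0 ≤ γ) (hγ1 : γ < 1) (s : S) :
    |Vval P θ' γ rw s - Vval P θ γ rw s| ≤ (1 - γ)⁻¹ := by
  have h1 := Vval_nonneg hP hθ hrw hγ0 s
  have h2 := Vval_le hP hθ hrw hγ0 hγ1 s
  have h3 := Vval_nonneg hP hθ' hrw hγ0 s
  have h4 := Vval_le hP hθ' hrw hγ0 hγ1 s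
  rw [abs_le]; constructor <;> linarith

lemma stepDist_eq_sum_delta (μ : S → ℝ) (s1 : S) :
    stepDist P θ μ s1 = ∑ s0, μ s0 * stepDist P θ (deltaDist s0) s1 := by
  have h := visit_eq_sum_delta (P := P) (θ := θ) 1 μ s1
  simpa [visit] using h

lemma pd_pointwise (hP : stochMat P) (hθ : feasible θ) (hθ' : feasible θ')
    (hrw : ∀ s a, 0 ≤ rw s a ∧ rw s a ≤ 1) (hγ0 : 0 ≤ γ) (hγ1 : γ < 1) (s : S) :
    Vval P θ' γ rw s = ∑ a, jointPi θ' s a * Qval P θ γ rw s a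
      + γ * ∑ s1, stepDist P θ' (deltaDist s) s1
          * (Vval P θ' γ rw s1 - Vval P θ γ rw s1) := by
  have key : γ * ∑ s1, stepDist P θ' (deltaDist s) s1
        * (Vval P θ' γ rw s1 - Vval P θ γ rw s1)
      = (∑ a, jointPi θ' s a * (γ * ∑ s1, P s a s1 * Vval P θ' γ rw s1))
        - ∑ a, jointPi θ' s a * (γ * ∑ s1, P s a s1 * Vval P θ γ rw s1) := by
    rw [Finset.sum_congr rfl fun s1 _ => by
      rw [stepDist_delta (θ := θ'), Finset.sum_mul]]
    simp only [Finset.mul_sum, ← Finset.sum_sub_distrib]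
    rw [Finset.sum_comm]
    exact Finset.sum_congr rfl fun a _ => Finset.sum_congr rfl fun s1 _ => by ring
  rw [Vval_eq_sum_Q hP hθ' hrw hγ0 hγ1 s, key]
  unfold Qval
  simp only [mul_add, Finset.sum_add_distrib]
  ring

lemma pd_step (hP : stochMat P) (hθ : feasible θ) (hθ' : feasible θ')
    (hrw : ∀ s a, 0 ≤ rw s a ∧ rw s a ≤ 1) (hγ0 : 0 ≤ γ) (hγ1 : γ < 1) (μ : S → ℝ) :
    ∑ s, μ s * (Vval P θ' γ rw s - Vval P θ γ rw s)
      = ∑ s, μ s * pdg P θ θ' γ rw s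
        + γ * ∑ s1, stepDist P θ' μ s1 * (Vval P θ' γ rw s1 - Vval P θ γ rw s1) := by
  have h1 : ∀ s, μ s * (Vval P θ' γ rw s - Vval P θ γ rw s)
      = μ s * pdg P θ θ' γ rw s
        + γ * ∑ s1, μ s * (stepDist P θ' (deltaDist s) s1
            * (Vval P θ' γ rw s1 - Vval P θ γ rw s1)) := by
    intro s
    rw [← Finset.mul_sum]
    have h := pd_pointwise hP hθ hθ' hrw hγ0 hγ1 s
    unfold pdg
    rw [show Vval P θ' γ rw s - Vval P θ γ rw s
        = (∑ a, jointPi θ' s a * Qval P θ γ rw s a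
          + γ * ∑ s1, stepDist P θ' (deltaDist s) s1
              * (Vval P θ' γ rw s1 - Vval P θ γ rw s1)) - Vval P θ γ rw s from by rw [← h]]
    ring
  rw [Finset.sum_congr rfl fun s _ => h1 s, Finset.sum_add_distrib]
  congr 1
  rw [← Finset.mul_sum]
  congr 1
  rw [Finset.sum_comm]
  refine Finset.sum_congr rfl fun s1 _ => ?_
  rw [stepDist_eq_sum_delta, Finset.sum_mul]
  exact Finset.sum_congr rfl fun s0 _ => by ring

lemma pd_iterate (hP : stochMat P) (hθ : feasible θ) (hθ' : feasible θ')
    (hrw : ∀ s a, 0 ≤ rw s a ∧ rw s a ≤ 1) (hγ0 : 0 ≤ γ) (hγ1 : γ < 1) (μ : S → ℝ) (T : ℕ) :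
    ∑ s, μ s * (Vval P θ' γ rw s - Vval P θ γ rw s)
      = (∑ t ∈ Finset.range T, γ ^ t * ∑ s, visit P θ' t μ s * pdg P θ θ' γ rw s)
        + γ ^ T * ∑ s, visit P θ' T μ s * (Vval P θ' γ rw s - Vval P θ γ rw s) := by
  induction T with
  | zero => simp [visit]
  | succ T ih =>
    rw [ih, Finset.sum_range_succ]
    have h := pd_step hP hθ hθ' hrw hγ0 hγ1 (visit P θ' T μ)
    rw [h]
    rw [show (∑ s1, stepDist P θ' (visit P θ' T μ) s1
        * (Vval P θ' γ rw s1 - Vval P θ γ rw s1))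
      = ∑ s1, visit P θ' (T+1) μ s1 * (Vval P θ' γ rw s1 - Vval P θ γ rw s1) from by
        rw [visit_succ']]
    ring

lemma pd_limit (hP : stochMat P) (hθ : feasible θ) (hθ' : feasible θ')
    (hrw : ∀ s a, 0 ≤ rw s a ∧ rw s a ≤ 1) (hγ0 : 0 ≤ γ) (hγ1 : γ < 1) (hμ : initDist μ) :
    ∑ s, μ s * (Vval P θ' γ rw s - Vval P θ γ rw s)
      = ∑' t : ℕ, γ ^ t * ∑ s, visit P θ' t μ s * pdg P θ θ' γ rw s := by
  set f : ℕ → ℝ := fun t => γ ^ t * ∑ s, visit P θ' t μ s * pdg P θ θ' γ rw s with hf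
  have hbound : ∀ t, |f t| ≤ (1 - γ)⁻¹ * γ ^ t := by
    intro t
    rw [hf, abs_mul, abs_of_nonneg (pow_nonneg hγ0 t), mul_comm ((1 - γ)⁻¹) (γ ^ t)]
    refine mul_le_mul_of_nonneg_left ?_ (pow_nonneg hγ0 t)
    exact abs_inner_le (visit_initDist hP hθ' hμ t)
      (abs_pdg_le hP hθ hθ' hrw hγ0 hγ1)
  have hsum : Summable f := summable_of_bound hγ0 hγ1 hbound
  have h1 : Tendsto (fun T => ∑ t ∈ Finset.range T, f t) atTop (nhds (∑' t, f t)) :=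
    hsum.hasSum.tendsto_sum_nat
  have hzero : Tendsto (fun T : ℕ => γ ^ T
      * ∑ s, visit P θ' T μ s * (Vval P θ' γ rw s - Vval P θ γ rw s)) atTop (nhds 0) := by
    have hb : ∀ T : ℕ, ‖γ ^ T * ∑ s, visit P θ' T μ s
        * (Vval P θ' γ rw s - Vval P θ γ rw s)‖ ≤ (1 - γ)⁻¹ * γ ^ T := by
      intro T
      rw [Real.norm_eq_abs, abs_mul, abs_of_nonneg (pow_nonneg hγ0 T),
        mul_comm ((1 - γ)⁻¹) (γ ^ T)]
      refine mul_le_mul_of_nonneg_left ?_ (pow_nonneg hγ0 T)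
      exact abs_inner_le (visit_initDist hP hθ' hμ T)
        (abs_Vdiff_le hP hθ hθ' hrw hγ0 hγ1)
    refine squeeze_zero_norm hb ?_
    have := (tendsto_pow_atTop_nhds_zero_of_lt_one hγ0 hγ1).const_mul ((1 - γ)⁻¹)
    simpa using this
  have h2 : Tendsto (fun T => ∑ t ∈ Finset.range T, f t) atTop
      (nhds (∑ s, μ s * (Vval P θ' γ rw s - Vval P θ γ rw s))) := by
    have h3 : ∀ T, ∑ t ∈ Finset.range T, f t
        = ∑ s, μ s * (Vval P θ' γ rw s - Vval P θ γ rw s)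
          - γ ^ T * ∑ s, visit P θ' T μ s * (Vval P θ' γ rw s - Vval P θ γ rw s) := by
      intro T
      rw [pd_iterate hP hθ hθ' hrw hγ0 hγ1 μ T]
      ring
    rw [show (fun T => ∑ t ∈ Finset.range T, f t) = fun T =>
        ∑ s, μ s * (Vval P θ' γ rw s - Vval P θ γ rw s)
          - γ ^ T * ∑ s, visit P θ' T μ s * (Vval P θ' γ rw s - Vval P θ γ rw s)
        from funext h3]
    simpa using tendsto_const_nhds.sub hzero
  exact tendsto_nhds_unique h2 h1

lemma perf_diff (hP : stochMat P) (hθ : feasible θ) (hθ' : feasible θ')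
    (hrw : ∀ s a, 0 ≤ rw s a ∧ rw s a ≤ 1) (hγ0 : 0 ≤ γ) (hγ1 : γ < 1) (hρ : initDist ρ) :
    Jval P θ' γ rw ρ - Jval P θ γ rw ρ
      = (1 - γ)⁻¹ * ∑ s, dvisit P θ' γ ρ s * pdg P θ θ' γ rw s := by
  have hγne : (1 : ℝ) - γ ≠ 0 := by linarith
  have hJ : Jval P θ' γ rw ρ - Jval P θ γ rw ρ
      = ∑ s, ρ s * (Vval P θ' γ rw s - Vval P θ γ rw s) := by
    unfold Jval
    rw [← Finset.sum_sub_distrib]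
    exact Finset.sum_congr rfl fun s _ => by ring
  have hsum_s : ∀ s : S, Summable (fun t : ℕ => γ ^ t * visit P θ' t ρ s * pdg P θ θ' γ rw s) := by
    intro s
    refine summable_of_bound (C := (1 - γ)⁻¹) hγ0 hγ1 fun t => ?_
    have hv := visit_initDist hP hθ' hρ t
    rw [abs_mul, abs_mul, abs_of_nonneg (pow_nonneg hγ0 t), abs_of_nonneg (hv.1 s)]
    calc γ ^ t * visit P θ' t ρ s * |pdg P θ θ' γ rw s|
        ≤ γ ^ t * 1 * (1 - γ)⁻¹ := by
          refine mul_le_mul ?_ (abs_pdg_le hP hθ hθ' hrw hγ0 hγ1 s) (abs_nonneg _) ?_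
          · exact mul_le_mul_of_nonneg_left (initDist_le_one hv s) (pow_nonneg hγ0 t)
          · have := pow_nonneg hγ0 t; nlinarith [initDist_le_one hv s, hv.1 s]
      _ = (1 - γ)⁻¹ * γ ^ t := by ring
  have hswap : ∑ s, dvisit P θ' γ ρ s * pdg P θ θ' γ rw s
      = (1 - γ) * ∑' t : ℕ, γ ^ t * ∑ s, visit P θ' t ρ s * pdg P θ θ' γ rw s := by
    unfold dvisit
    have h1 : ∀ s : S, (1 - γ) * (∑' t : ℕ, γ ^ t * visit P θ' t ρ s) * pdg P θ θ' γ rw s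
        = (1 - γ) * ∑' t : ℕ, γ ^ t * visit P θ' t ρ s * pdg P θ θ' γ rw s := by
      intro s
      rw [mul_assoc]
      congr 1
      rw [← tsum_mul_right]
    rw [Finset.sum_congr rfl fun s _ => h1 s, ← Finset.mul_sum]
    congr 1
    rw [← Summable.tsum_finsetSum fun s _ => hsum_s s]
    refine tsum_congr fun t => ?_
    rw [Finset.mul_sum]
    exact Finset.sum_congr rfl fun s _ => by ring
  rw [hJ, pd_limit hP hθ hθ' hrw hγ0 hγ1 hρ, hswap]
  rw [← mul_assoc, inv_mul_cancel₀ hγne, one_mul]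

end Helpers3
section Helpers4
set_option linter.unusedSectionVars false
open MAMDP Finset

variable {n : ℕ} {S : Type} [Fintype S] [DecidableEq S]
  {A : Fin n → Type} [∀ i, Fintype (A i)] [∀ i, DecidableEq (A i)]
  {P : S → (∀ i, A i) → S → ℝ} {θ : ∀ i, S → A i → ℝ} {γ : ℝ}
  {rw : S → (∀ i, A i) → ℝ} {ρ : S → ℝ}

lemma feasible_update (hθ : feasible θ) {i : Fin n} {θi' : S → A i → ℝ}
    (h : feasibleAgent i θi') : feasible (Function.update θ i θi') := by
  intro j
  rcases eq_or_ne j i with rfl | hne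
  · rw [Function.update_self]; exact h
  · rw [Function.update_of_ne hne]; exact hθ j

lemma pdg_update {i : Fin n} {θi' : S → A i → ℝ} (hθi' : feasibleAgent i θi') (s : S) :
    pdg P θ (Function.update θ i θi') γ rw s
      = ∑ ai, θi' s ai * Abar P θ γ rw i s ai := by
  unfold pdg Abar
  rw [sum_jointPi_update_Q]
  simp only [mul_sub, Finset.sum_sub_distrib]
  congr 1
  rw [← Finset.sum_mul, (hθi' s).2, one_mul]

lemma perf_diff_update (hP : stochMat P) (hθ : feasible θ)
    (hrw : ∀ s a, 0 ≤ rw s a ∧ rw s a ≤ 1) (hγ0 : 0 ≤ γ) (hγ1 : γ < 1) (hρ : initDist ρ)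
    {i : Fin n} {θi' : S → A i → ℝ} (hθi' : feasibleAgent i θi') :
    Jval P (Function.update θ i θi') γ rw ρ - Jval P θ γ rw ρ
      = (1 - γ)⁻¹ * ∑ s, dvisit P (Function.update θ i θi') γ ρ s
          * ∑ ai, θi' s ai * Abar P θ γ rw i s ai := by
  rw [perf_diff hP hθ (feasible_update hθ hθi') hrw hγ0 hγ1 hρ]
  congr 1
  exact Finset.sum_congr rfl fun s _ => by rw [pdg_update hθi']

lemma sum_theta_Abar (hP : stochMat P) (hθ : feasible θ)
    (hrw : ∀ s a, 0 ≤ rw s a ∧ rw s a ≤ 1) (hγ0 : 0 ≤ γ) (hγ1 : γ < 1) (i : Fin n) (s : S) :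
    ∑ ai, θ i s ai * Abar P θ γ rw i s ai = 0 := by
  unfold Abar
  simp only [mul_sub, Finset.sum_sub_distrib]
  rw [← Vval_eq_sum_Qbar hP hθ hrw hγ0 hγ1 i s, ← Finset.sum_mul, (hθ i s).2, one_mul, sub_self]

end Helpers4

open MAMDP

/-- Strict Nash equilibria are pure, with zero averaged advantage at the optimal action
and strictly negative averaged advantage at every other action. -/
theorem stmt12 {n : ℕ} {S : Type} [Fintype S] [DecidableEq S]
    {A : Fin n → Type} [∀ i, Fintype (A i)] [∀ i, DecidableEq (A i)]
    (P : S → (∀ i, A i) → S → ℝ) (hP : stochMat P)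
    (r : Fin n → S → (∀ i, A i) → ℝ) (hr : ∀ i s a, 0 ≤ r i s a ∧ r i s a ≤ 1)
    (γ : ℝ) (hγ0 : 0 ≤ γ) (hγ1 : γ < 1)
    (ρ : S → ℝ) (hρ : initDist ρ)
    (hd : ∀ θ : ∀ i, S → A i → ℝ, feasible θ → ∀ s, 0 < dvisit P θ γ ρ s)
    (θstar : ∀ i, S → A i → ℝ) (hNE : strictNE P γ r ρ θstar) :
    ∃ astar : ∀ i : Fin n, S → A i,
      (∀ i s a, θstar i s a = if a = astar i s then 1 else 0) ∧
      (∀ i s, Abar P θstar γ (r i) i s (astar i s) = 0) ∧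
      (∀ (i : Fin n) (s : S) (a : A i), a ≠ astar i s →
        Abar P θstar γ (r i) i s a < 0) := by
  obtain ⟨hfeas, hstrict⟩ := hNE
  cases isEmpty_or_nonempty S with
  | inl hS =>
      exact ⟨fun i s => hS.elim s, fun i s => hS.elim s, fun i s => hS.elim s,
        fun i s => hS.elim s⟩
  | inr hS =>
    have hA : ∀ i, Nonempty (A i) := by
      intro i
      by_contra h
      have hempty : IsEmpty (A i) := not_nonempty_iff.mp h
      have h2 := (hfeas i hS.some).2
      rw [Finset.univ_eq_empty, Finset.sum_empty] at h2
      exact one_ne_zero h2.symm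
    have hmax : ∀ (i : Fin n) (s : S), ∃ am : A i,
        ∀ b, Qbar P θstar γ (r i) i s b ≤ Qbar P θstar γ (r i) i s am := by
      intro i s
      obtain ⟨am, _, ham⟩ := Finset.exists_max_image Finset.univ
        (fun b => Qbar P θstar γ (r i) i s b) ⟨(hA i).some, Finset.mem_univ _⟩
      exact ⟨am, fun b => ham b (Finset.mem_univ b)⟩
    choose amax hamax using hmax
    have hinv : (0:ℝ) ≤ (1 - γ)⁻¹ := by
      have : (0:ℝ) < 1 - γ := by linarith
      positivity
    -- Step 1: θstar is pure at amax
    have hpure : ∀ i, θstar i = fun s ai => if ai = amax i s then (1:ℝ) else 0 := by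
      intro i
      by_contra hne
      set θi' : S → A i → ℝ := fun s ai => if ai = amax i s then 1 else 0 with hθi'
      have hfi : feasibleAgent i θi' := by
        intro s
        refine ⟨fun a => ?_, by simp [θi', Finset.sum_ite_eq']⟩
        dsimp only [θi']
        split <;> norm_num
      have hlt := hstrict i θi' hfi (fun hh => hne hh.symm)
      have hpd := perf_diff_update hP hfeas (hr i) hγ0 hγ1 hρ hfi
      have hterm : ∀ s, ∑ ai, θi' s ai * Abar P θstar γ (r i) i s ai
          = Abar P θstar γ (r i) i s (amax i s) := by
        intro s
        simp [θi', ite_mul, Finset.sum_ite_eq']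
      have hAnn : ∀ s, 0 ≤ Abar P θstar γ (r i) i s (amax i s) := by
        intro s
        unfold Abar
        have hV := Vval_eq_sum_Qbar hP hfeas (hr i) hγ0 hγ1 i s
        have hle : ∑ ai, θstar i s ai * Qbar P θstar γ (r i) i s ai
            ≤ Qbar P θstar γ (r i) i s (amax i s) :=
          wsum_le (hfeas i s).1 (hfeas i s).2 (fun b => hamax i s b)
        linarith [hV ▸ hle]
      have hnonneg : 0 ≤ Jval P (Function.update θstar i θi') γ (r i) ρ
          - Jval P θstar γ (r i) ρ := by
        rw [hpd]
        refine mul_nonneg hinv (Finset.sum_nonneg fun s _ => ?_)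
        rw [hterm s]
        exact mul_nonneg (le_of_lt (hd _ (feasible_update hfeas hfi) s)) (hAnn s)
      linarith
    have hval : ∀ i s ai, θstar i s ai = if ai = amax i s then 1 else 0 :=
      fun i s ai => congrFun (congrFun (hpure i) s) ai
    -- Step 2: zero advantage at amax
    have hsumA : ∀ i s, ∑ ai, θstar i s ai * Abar P θstar γ (r i) i s ai
        = Abar P θstar γ (r i) i s (amax i s) := by
      intro i s
      rw [Finset.sum_congr rfl fun ai _ => by rw [hval i s ai]]
      simp [ite_mul, Finset.sum_ite_eq']
    have hzero : ∀ i s, Abar P θstar γ (r i) i s (amax i s) = 0 := by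
      intro i s
      rw [← hsumA i s]
      exact sum_theta_Abar hP hfeas (hr i) hγ0 hγ1 i s
    -- Step 3: strict negativity elsewhere
    refine ⟨amax, hval, hzero, ?_⟩
    intro i s a hne
    have hle : Abar P θstar γ (r i) i s a ≤ 0 := by
      have h1 := hamax i s a
      have h2 := hzero i s
      unfold Abar at h2 ⊢
      linarith
    rcases lt_or_eq_of_le hle with h | h
    · exact h
    exfalso
    set θi'' : S → A i → ℝ :=
      fun s' ai => if s' = s then (if ai = a then 1 else 0) else θstar i s' ai with hθi''
    have hfi : feasibleAgent i θi'' := by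
      intro t
      by_cases hs : t = s
      · constructor
        · intro ai
          simp only [hθi'', if_pos hs]
          split <;> norm_num
        · simp only [hθi'', if_pos hs]
          simp [Finset.sum_ite_eq']
      · constructor
        · intro ai; simp only [hθi'', if_neg hs]; exact (hfeas i t).1 ai
        · simp only [hθi'', if_neg hs]; exact (hfeas i t).2
    have hnei : θi'' ≠ θstar i := by
      intro hcontra
      have h1 : θi'' s a = 1 := by simp [hθi'']
      have h2 : θstar i s a = 0 := by rw [hval i s a, if_neg hne]
      rw [hcontra, h2] at h1
      exact one_ne_zero h1.symm
    have hlt := hstrict i θi'' hfi hnei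
    have hpd := perf_diff_update hP hfeas (hr i) hγ0 hγ1 hρ hfi
    have hterm : ∀ t, ∑ ai, θi'' t ai * Abar P θstar γ (r i) i t ai = 0 := by
      intro t
      by_cases hs : t = s
      · subst hs
        simpa [hθi'', ite_mul, Finset.sum_ite_eq'] using h
      · rw [Finset.sum_congr rfl fun ai _ => by
          rw [show θi'' t ai = θstar i t ai from by simp [hθi'', hs]]]
        exact sum_theta_Abar hP hfeas (hr i) hγ0 hγ1 i t
    have hzeroJ : Jval P (Function.update θstar i θi'') γ (r i) ρ
        - Jval P θstar γ (r i) ρ = 0 := by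
      rw [hpd, Finset.sum_congr rfl fun s' _ => by rw [hterm s', mul_zero],
        Finset.sum_const_zero, mul_zero]
    linarith
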